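/- There exist β₂ > 0 and continuously differentiable functions k, l : (-β₂, β₂) → (0, ∞) with k(0) = μ₁^{-1/(p-1)} and l(0) = μ₂^{-1/(p-1)} such that μ₁ k(β)^{p-1} + β k(β)^{p/2-1} l(β)^{p/2} = 1 and μ₂ l(β)^{p-1} + β l(β)^{p/2-1} k(β)^{p/2} = 1 for all β ∈ (-β₂, β₂); moreover there exists β₁ ∈ (0, β₂] such that k(β) + l(β) > min{μ₁^{-(N-2)/2}, μ₂^{-(N-2)/2}} for all β ∈ (0, β₁). -/

import Mathlib

open Real

noncomputable def triEquiv (a b c₁ c₂ : ℝ) (h₁ : c₁ ≠ 0) (h₂ : c₂ ≠ 0) :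
    (ℝ × ℝ × ℝ) ≃L[ℝ] (ℝ × ℝ × ℝ) :=
{ toFun := fun x => (x.1, a * x.1 + c₁ * x.2.1, b * x.1 + c₂ * x.2.2),
  invFun := fun y => (y.1, (y.2.1 - a * y.1) / c₁, (y.2.2 - b * y.1) / c₂),
  map_add' := by intro x y; simp [Prod.ext_iff]; constructor <;> ring
  map_smul' := by intro c x; simp [Prod.ext_iff]; constructor <;> ring
  left_inv := by
    intro x
    simp only [Prod.ext_iff]
    refine ⟨trivial, ?_, ?_⟩ <;> field_simp <;> ring
  right_inv := by
    intro y
    simp only [Prod.ext_iff]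
    refine ⟨trivial, ?_, ?_⟩ <;> field_simp <;> ring
  continuous_toFun := by fun_prop
  continuous_invFun := by fun_prop }

@[simp] lemma triEquiv_apply (a b c₁ c₂ : ℝ) (h₁ : c₁ ≠ 0) (h₂ : c₂ ≠ 0) (x : ℝ × ℝ × ℝ) :
    (triEquiv a b c₁ c₂ h₁ h₂ : (ℝ × ℝ × ℝ) →L[ℝ] (ℝ × ℝ × ℝ)) x =
      (x.1, a * x.1 + c₁ * x.2.1, b * x.1 + c₂ * x.2.2) := rfl

theorem stmt_9 (N : ℕ) (hN : 5 ≤ N) (p : ℝ) (hp : p = (N : ℝ) / ((N : ℝ) - 2))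
    (μ₁ μ₂ : ℝ) (hμ₁ : 0 < μ₁) (hμ₂ : 0 < μ₂) :
    ∃ β₂ > (0 : ℝ), ∃ k l : ℝ → ℝ,
      ContDiffOn ℝ 1 k (Set.Ioo (-β₂) β₂) ∧ ContDiffOn ℝ 1 l (Set.Ioo (-β₂) β₂) ∧
      k 0 = μ₁ ^ (-(1 / (p - 1))) ∧ l 0 = μ₂ ^ (-(1 / (p - 1))) ∧
      (∀ β ∈ Set.Ioo (-β₂) β₂, 0 < k β ∧ 0 < l β ∧
        μ₁ * k β ^ (p - 1) + β * k β ^ (p / 2 - 1) * l β ^ (p / 2) = 1 ∧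
        μ₂ * l β ^ (p - 1) + β * l β ^ (p / 2 - 1) * k β ^ (p / 2) = 1) ∧
      ∃ β₁ : ℝ, 0 < β₁ ∧ β₁ ≤ β₂ ∧ ∀ β ∈ Set.Ioo (0 : ℝ) β₁,
        min (μ₁ ^ (-(((N : ℝ) - 2) / 2))) (μ₂ ^ (-(((N : ℝ) - 2) / 2))) < k β + l β := by
  have hN5 : (5 : ℝ) ≤ (N : ℝ) := by exact_mod_cast hN
  have hN2 : (0 : ℝ) < (N : ℝ) - 2 := by linarith
  have hpm1 : p - 1 = 2 / ((N : ℝ) - 2) := by rw [hp]; field_simp; ring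
  have hp1 : 0 < p - 1 := by rw [hpm1]; positivity
  have hexp : (1 : ℝ) / (p - 1) = ((N : ℝ) - 2) / 2 := by rw [hpm1, one_div_div]
  set k₀ : ℝ := μ₁ ^ (-(1 / (p - 1))) with hk₀def
  set l₀ : ℝ := μ₂ ^ (-(1 / (p - 1))) with hl₀def
  have hk₀ : 0 < k₀ := rpow_pos_of_pos hμ₁ _
  have hl₀ : 0 < l₀ := rpow_pos_of_pos hμ₂ _
  have hexpm : -(1 / (p - 1)) * (p - 1) = -1 := by field_simp
  have hkeq : μ₁ * k₀ ^ (p - 1) = 1 := by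
    rw [hk₀def, ← Real.rpow_mul hμ₁.le, hexpm, Real.rpow_neg_one, mul_inv_cancel₀ hμ₁.ne']
  have hleq : μ₂ * l₀ ^ (p - 1) = 1 := by
    rw [hl₀def, ← Real.rpow_mul hμ₂.le, hexpm, Real.rpow_neg_one, mul_inv_cancel₀ hμ₂.ne']
  -- the map
  set x₀ : ℝ × ℝ × ℝ := (0, k₀, l₀) with hx₀def
  set F : ℝ × ℝ × ℝ → ℝ × ℝ × ℝ := fun x =>
    (x.1, μ₁ * x.2.1 ^ (p - 1) + x.1 * (x.2.1 ^ (p / 2 - 1) * x.2.2 ^ (p / 2)),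
      μ₂ * x.2.2 ^ (p - 1) + x.1 * (x.2.2 ^ (p / 2 - 1) * x.2.1 ^ (p / 2))) with hFdef
  have hFx₀ : F x₀ = ((0 : ℝ), 1, 1) := by
    simp only [hFdef, hx₀def, zero_mul, add_zero]
    rw [hkeq, hleq]
  -- continuous differentiability of F at x₀
  have ck : ContDiffAt ℝ 1 (fun x : ℝ × ℝ × ℝ => x.2.1) x₀ :=
    (contDiff_fst.comp contDiff_snd).contDiffAt
  have cl : ContDiffAt ℝ 1 (fun x : ℝ × ℝ × ℝ => x.2.2) x₀ :=
    (contDiff_snd.comp contDiff_snd).contDiffAt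
  have cβ : ContDiffAt ℝ 1 (fun x : ℝ × ℝ × ℝ => x.1) x₀ := contDiff_fst.contDiffAt
  have hF : ContDiffAt ℝ 1 F x₀ := by
    refine cβ.prodMk (ContDiffAt.prodMk ?_ ?_)
    · exact ((contDiffAt_const.mul (ck.rpow_const_of_ne hk₀.ne')).add
        (cβ.mul ((ck.rpow_const_of_ne hk₀.ne').mul (cl.rpow_const_of_ne hl₀.ne'))))
    · exact ((contDiffAt_const.mul (cl.rpow_const_of_ne hl₀.ne')).add
        (cβ.mul ((cl.rpow_const_of_ne hl₀.ne').mul (ck.rpow_const_of_ne hk₀.ne'))))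
  -- derivative of F at x₀
  set a : ℝ := k₀ ^ (p / 2 - 1) * l₀ ^ (p / 2) with hadef
  set b : ℝ := l₀ ^ (p / 2 - 1) * k₀ ^ (p / 2) with hbdef
  set c₁ : ℝ := μ₁ * ((p - 1) * k₀ ^ (p - 1 - 1)) with hc₁def
  set c₂ : ℝ := μ₂ * ((p - 1) * l₀ ^ (p - 1 - 1)) with hc₂def
  have hc₁ : c₁ ≠ 0 := by positivity
  have hc₂ : c₂ ≠ 0 := by positivity
  set e := triEquiv a b c₁ c₂ hc₁ hc₂ with hedef
  have hF' : HasFDerivAt F (e : (ℝ × ℝ × ℝ) →L[ℝ] (ℝ × ℝ × ℝ)) x₀ := by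
    have hβ : HasFDerivAt (fun x : ℝ × ℝ × ℝ => x.1)
        (ContinuousLinearMap.fst ℝ ℝ (ℝ × ℝ)) x₀ := hasFDerivAt_fst
    have hk : HasFDerivAt (fun x : ℝ × ℝ × ℝ => x.2.1)
        ((ContinuousLinearMap.fst ℝ ℝ ℝ).comp (ContinuousLinearMap.snd ℝ ℝ (ℝ × ℝ))) x₀ :=
      HasFDerivAt.fst (hasFDerivAt_snd (p := x₀))
    have hl : HasFDerivAt (fun x : ℝ × ℝ × ℝ => x.2.2)
        ((ContinuousLinearMap.snd ℝ ℝ ℝ).comp (ContinuousLinearMap.snd ℝ ℝ (ℝ × ℝ))) x₀ :=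
      HasFDerivAt.snd (hasFDerivAt_snd (p := x₀))
    have h2 := ((hk.rpow_const (p := p - 1) (Or.inl hk₀.ne')).const_mul μ₁).add
      (hβ.mul ((hk.rpow_const (p := p / 2 - 1) (Or.inl hk₀.ne')).mul
        (hl.rpow_const (p := p / 2) (Or.inl hl₀.ne'))))
    have h3 := ((hl.rpow_const (p := p - 1) (Or.inl hl₀.ne')).const_mul μ₂).add
      (hβ.mul ((hl.rpow_const (p := p / 2 - 1) (Or.inl hl₀.ne')).mul
        (hk.rpow_const (p := p / 2) (Or.inl hk₀.ne'))))
    have h := hβ.prodMk (h2.prodMk h3)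
    convert h using 1
    all_goals try rfl
    refine ContinuousLinearMap.ext fun v => ?_
    simp only [triEquiv_apply, hedef, ContinuousLinearMap.prod_apply,
      ContinuousLinearMap.add_apply, ContinuousLinearMap.smul_apply,
      ContinuousLinearMap.comp_apply, ContinuousLinearMap.coe_fst',
      ContinuousLinearMap.coe_snd', smul_eq_mul, hx₀def]
    refine Prod.ext rfl (Prod.ext ?_ ?_) <;> simp <;> ring
  -- local inverse
  have hn : (1 : WithTop ℕ∞) ≠ 0 := one_ne_zero
  set g : ℝ × ℝ × ℝ → ℝ × ℝ × ℝ := hF.localInverse hF' hn with hgdef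
  have hg0 : g ((0 : ℝ), 1, 1) = x₀ := by
    rw [hgdef, ← hFx₀]; exact hF.localInverse_apply_image hF' hn
  have hgC : ContDiffAt ℝ 1 g ((0 : ℝ), 1, 1) := by
    rw [← hFx₀] at *; exact hF.to_localInverse hF' hn
  have hright : ∀ᶠ y in nhds ((0 : ℝ), (1 : ℝ), (1 : ℝ)), F (g y) = y := by
    rw [← hFx₀]
    exact (hF.hasStrictFDerivAt' hF' hn).eventually_right_inverse
  obtain ⟨u, hu, hgu⟩ := hgC.contDiffOn le_rfl (by norm_num)
  -- positivity neighborhood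
  have hposopen : IsOpen {x : ℝ × ℝ × ℝ | 0 < x.2.1 ∧ 0 < x.2.2} := by
    refine IsOpen.inter ?_ ?_
    · exact isOpen_lt continuous_const (continuous_fst.comp continuous_snd)
    · exact isOpen_lt continuous_const (continuous_snd.comp continuous_snd)
  have hW : g ⁻¹' {x : ℝ × ℝ × ℝ | 0 < x.2.1 ∧ 0 < x.2.2} ∈ nhds ((0 : ℝ), (1 : ℝ), (1 : ℝ)) := by
    refine hgC.continuousAt.preimage_mem_nhds (hposopen.mem_nhds ?_)
    rw [hg0]; exact ⟨hk₀, hl₀⟩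
  have hV : u ∩ ({y | F (g y) = y} ∩ g ⁻¹' {x : ℝ × ℝ × ℝ | 0 < x.2.1 ∧ 0 < x.2.2})
      ∈ nhds ((0 : ℝ), (1 : ℝ), (1 : ℝ)) :=
    Filter.inter_mem hu (Filter.inter_mem hright hW)
  -- pull back along β ↦ (β, 1, 1)
  set ι : ℝ → ℝ × ℝ × ℝ := fun β => (β, 1, 1) with hιdef
  have hιc : ContDiff ℝ 1 ι := contDiff_id.prodMk contDiff_const
  have hι0 : ι 0 = ((0 : ℝ), 1, 1) := rfl
  have hVι : ι ⁻¹' (u ∩ ({y | F (g y) = y} ∩ g ⁻¹' {x : ℝ × ℝ × ℝ | 0 < x.2.1 ∧ 0 < x.2.2}))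
      ∈ nhds (0 : ℝ) := by
    refine hιc.continuous.continuousAt.preimage_mem_nhds ?_
    rw [hι0]; exact hV
  obtain ⟨β₂, hβ₂pos, hβ₂sub⟩ := Metric.mem_nhds_iff.1 hVι
  rw [Real.ball_eq_Ioo, zero_sub, zero_add] at hβ₂sub
  refine ⟨β₂, hβ₂pos, fun β => (g (ι β)).2.1, fun β => (g (ι β)).2.2, ?_, ?_, ?_, ?_, ?_, ?_⟩
  · exact (contDiff_fst.comp contDiff_snd).comp_contDiffOn
      ((hgu.comp hιc.contDiffOn) fun β hβ => (hβ₂sub hβ).1)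
  · exact (contDiff_snd.comp contDiff_snd).comp_contDiffOn
      ((hgu.comp hιc.contDiffOn) fun β hβ => (hβ₂sub hβ).1)
  · exact congrArg (fun z : ℝ × ℝ × ℝ => z.2.1) hg0
  · exact congrArg (fun z : ℝ × ℝ × ℝ => z.2.2) hg0
  · intro β hβ
    have hmem := hβ₂sub hβ
    have hpos := hmem.2.2
    have heq : F (g (ι β)) = ι β := hmem.2.1
    have h1 : (g (ι β)).1 = β := congrArg Prod.fst heq
    have h2 : μ₁ * (g (ι β)).2.1 ^ (p - 1) +
        (g (ι β)).1 * ((g (ι β)).2.1 ^ (p / 2 - 1) * (g (ι β)).2.2 ^ (p / 2)) = 1 :=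
      congrArg (fun z => z.2.1) heq
    have h3 : μ₂ * (g (ι β)).2.2 ^ (p - 1) +
        (g (ι β)).1 * ((g (ι β)).2.2 ^ (p / 2 - 1) * (g (ι β)).2.1 ^ (p / 2)) = 1 :=
      congrArg (fun z => z.2.2) heq
    rw [h1] at h2 h3
    exact ⟨hpos.1, hpos.2, by linear_combination h2, by linear_combination h3⟩
  · -- final claim
    have hmin : min (μ₁ ^ (-(((N : ℝ) - 2) / 2))) (μ₂ ^ (-(((N : ℝ) - 2) / 2))) = min k₀ l₀ := by
      rw [hk₀def, hl₀def, hexp]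
    have hgι : ContinuousAt (fun β : ℝ => g (ι β)) 0 :=
      ContinuousAt.comp (f := ι) hgC.continuousAt hιc.continuous.continuousAt
    have hcont : ContinuousAt (fun β => (g (ι β)).2.1 + (g (ι β)).2.2) 0 :=
      (hgι.snd.fst).add (hgι.snd.snd)
    have hval : (g (ι 0)).2.1 + (g (ι 0)).2.2 = k₀ + l₀ := by rw [hι0, hg0]
    have hgt : min k₀ l₀ < k₀ + l₀ :=
      lt_of_le_of_lt (min_le_left _ _) (by linarith)
    have hev : ∀ᶠ β in nhds (0 : ℝ), min k₀ l₀ < (g (ι β)).2.1 + (g (ι β)).2.2 := by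
      have : Set.Ioi (min k₀ l₀) ∈ nhds ((g (ι 0)).2.1 + (g (ι 0)).2.2) := by
        rw [hval]; exact Ioi_mem_nhds hgt
      exact hcont this
    obtain ⟨δ, hδpos, hδsub⟩ := Metric.mem_nhds_iff.1 hev
    rw [Real.ball_eq_Ioo, zero_sub, zero_add] at hδsub
    refine ⟨min δ β₂, lt_min hδpos hβ₂pos, min_le_right _ _, fun β hβ => ?_⟩
    rw [hmin]
    exact hδsub ⟨by linarith [hβ.1, lt_min_iff.1 (lt_of_lt_of_le hβ.2 le_rfl), hδpos],
      lt_of_lt_of_le hβ.2 (min_le_left _ _)⟩
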